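/- For the actSIS risk-averter model, every endemic equilibrium (p*, p*) with p* ∈ (0,1) is locally exponentially stable: the trace of the Jacobian at the equilibrium is negative and its determinant is positive. -/
import Mathlib


/-- actSIS risk-averters: every endemic equilibrium is locally exponentially
stable: the Jacobian has negative trace and positive determinant. -/
theorem actSIS_averter_EE_stable (β δ τ : ℝ) (hβ : 0 < β) (hδ : 0 < δ)
    (hτ : 0 < τ) (φA φA' : ℝ → ℝ) (hderiv : ∀ x, HasDerivAt φA (φA' x) x)
    (hφ' : ∀ x, 0 ≤ φA' x)
    (p : ℝ) (hp : p ∈ Set.Ioo (0 : ℝ) 1)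
    (hEE : (1 - φA p) * (1 - p) = δ / β)
    (J : Matrix (Fin 2) (Fin 2) ℝ)
    (hJ : J = !![-(δ * p / (1 - p)), -(β * (1 - p) * p * φA' p);
                 1 / τ, -(1 / τ)]) :
    J.trace < 0 ∧ 0 < J.det := by
  obtain ⟨hp0, hp1⟩ := hp
  have h1p : 0 < 1 - p := by linarith
  have ha : 0 < δ * p / (1 - p) := by positivity
  have hb : 0 ≤ β * (1 - p) * p * φA' p := by
    have := hφ' p; positivity
  subst hJ
  constructor
  · rw [Matrix.trace_fin_two]
    simp [Matrix.cons_val_zero, Matrix.cons_val_one]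
    have : 0 < τ⁻¹ := by positivity
    linarith
  · rw [Matrix.det_fin_two_of]
    have hτ' : 0 < 1 / τ := by positivity
    nlinarith [mul_nonneg hb hτ'.le]
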